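/- arXiv:1010.3686 — 6 statements merged into one kernel-verified Lean document; each statement's English description precedes it below -/
import Mathlib

section
/- Let f be a homeomorphism of a compact metric space (X, dist). For any open neighborhood U of the nonwandering set Ω(f) there exist positive numbers B and d₁ such that: if {x_i}_{i∈ℤ} is a d-pseudotrajectory of f with d ≤ d₁ and x_k, x_{k+1}, ..., x_{k+l} ∉ U for some l > 0 and k ∈ ℤ, then l ≤ B. -/
/-- `x : ℤ → X` is a `d`-pseudotrajectory of `f`: `dist (f (x i)) (x (i+1)) < d` for all `i`. -/
def IsPseudoTraj {X : Type*} [MetricSpace X] (f : X → X) (d : ℝ) (x : ℤ → X) : Prop :=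
  ∀ i : ℤ, dist (f (x i)) (x (i + 1)) < d

/-- The nonwandering set of `f`: points `x` such that for every neighborhood `V` of `x`
there exists `n ≥ 1` with `f^[n] '' V ∩ V ≠ ∅`. -/
def NonWanderingSet {X : Type*} [TopologicalSpace X] (f : X → X) : Set X :=
  {x | ∀ V ∈ nhds x, ∃ n : ℕ, 1 ≤ n ∧ ∃ y ∈ V, f^[n] y ∈ V}

open Filter Topology Metric Set Function

/-- The complement of the nonwandering set is open. -/
lemma isOpen_compl_nonWanderingSet {X : Type*} [TopologicalSpace X] (f : X → X) :
    IsOpen (NonWanderingSet f)ᶜ := by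
  rw [isOpen_iff_mem_nhds]
  intro x hx
  simp only [Set.mem_compl_iff, NonWanderingSet, Set.mem_setOf_eq, not_forall] at hx
  obtain ⟨V, hV, hno⟩ := hx
  obtain ⟨W, hWV, hWopen, hxW⟩ := mem_nhds_iff.mp hV
  filter_upwards [hWopen.mem_nhds hxW] with w hw
  simp only [Set.mem_compl_iff, NonWanderingSet, Set.mem_setOf_eq, not_forall]
  refine ⟨W, hWopen.mem_nhds hw, ?_⟩
  intro ⟨n, hn1, y, hyW, hfy⟩
  exact hno ⟨n, hn1, y, hWV hyW, hWV hfy⟩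

/-- A cluster point of a forward orbit is nonwandering. -/
lemma clusterPt_orbit_nonWandering {X : Type*} [TopologicalSpace X] (f : X → X) (y z : X)
    (hz : MapClusterPt z atTop (fun n => f^[n] y)) : z ∈ NonWanderingSet f := by
  intro V hV
  have hfreq : ∃ᶠ n in atTop, f^[n] y ∈ V := (mapClusterPt_iff_frequently.mp hz) V hV
  rw [Filter.frequently_atTop] at hfreq
  obtain ⟨n₀, -, hn₀⟩ := hfreq 0
  obtain ⟨n₁, hn₁ge, hn₁⟩ := hfreq (n₀ + 1)
  refine ⟨n₁ - n₀, by omega, f^[n₀] y, hn₀, ?_⟩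
  rw [← Function.iterate_add_apply]
  have : n₁ - n₀ + n₀ = n₁ := by omega
  rw [this]
  exact hn₁

/-- Let `f` be a homeomorphism of a compact metric space `X`. For any open neighborhood `U`
of the nonwandering set `Ω(f)` there exist positive numbers `B, d₁` such that: if `{x i}`
is a `d`-pseudotrajectory of `f` with `d ≤ d₁` and `x k, x (k+1), …, x (k+l) ∉ U` for
some `l > 0` and `k ∈ ℤ`, then `l ≤ B`. -/
theorem omega_stability_lemma1 {X : Type*} [MetricSpace X] [CompactSpace X]
    (f : X ≃ₜ X) (U : Set X) (hUopen : IsOpen U) (hU : NonWanderingSet f ⊆ U) :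
    ∃ B > (0 : ℝ), ∃ d₁ > (0 : ℝ), ∀ d : ℝ, 0 < d → d ≤ d₁ →
      ∀ x : ℤ → X, IsPseudoTraj f d x →
        ∀ (k : ℤ) (l : ℕ), 0 < l →
          (∀ j : ℕ, j ≤ l → x (k + j) ∉ U) → (l : ℝ) ≤ B := by
  classical
  set K : Set X := Uᶜ with hKdef
  have hKcompact : IsCompact K := (hUopen.isClosed_compl).isCompact
  have hKsub : K ⊆ (NonWanderingSet ⇑f)ᶜ := Set.compl_subset_compl.mpr hU
  obtain ⟨δ, hδpos, hδ⟩ :=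
    hKcompact.exists_thickening_subset_open (isOpen_compl_nonWanderingSet ⇑f) hKsub
  set K' : Set X := Metric.cthickening (δ / 2) K with hK'def
  have hK'closed : IsClosed K' := Metric.isClosed_cthickening
  have hK'Ω : K' ⊆ (NonWanderingSet ⇑f)ᶜ :=
    (Metric.cthickening_subset_thickening' hδpos (by linarith) K).trans hδ
  -- True orbit lemma: orbits cannot stay in K' for more than N steps.
  have horb : ∃ N : ℕ, ∀ y : X, ∃ i ≤ N, f^[i] y ∉ K' := by
    by_contra h
    push_neg at h
    choose y hy using h
    obtain ⟨p, hp⟩ := exists_clusterPt_of_compactSpace (map y atTop)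
    have hpcl : MapClusterPt p atTop y := hp
    have hporbit : ∀ i : ℕ, f^[i] p ∈ K' := by
      intro i
      have hclosed : IsClosed ((⇑f)^[i] ⁻¹' K') :=
        hK'closed.preimage (f.continuous.iterate i)
      have hle : map y atTop ≤ 𝓟 ((⇑f)^[i] ⁻¹' K') := by
        rw [le_principal_iff, mem_map]
        filter_upwards [eventually_ge_atTop i] with N hN
        exact hy N i hN
      have : ClusterPt p (𝓟 ((⇑f)^[i] ⁻¹' K')) := hpcl.clusterPt.mono hle
      exact hclosed.closure_subset (mem_closure_iff_clusterPt.mpr this)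
    obtain ⟨z, hz⟩ := exists_clusterPt_of_compactSpace (map (fun n => (⇑f)^[n] p) atTop)
    have hzcl : MapClusterPt z atTop (fun n => (⇑f)^[n] p) := hz
    have hzK' : z ∈ K' := by
      have hle : map (fun n => (⇑f)^[n] p) atTop ≤ 𝓟 K' := by
        rw [le_principal_iff, mem_map]
        exact Filter.Eventually.of_forall fun n => hporbit n
      exact hK'closed.closure_subset
        (mem_closure_iff_clusterPt.mpr (hzcl.clusterPt.mono hle))
    exact hK'Ω hzK' (clusterPt_orbit_nonWandering ⇑f p z hzcl)
  obtain ⟨N, hN⟩ := horb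
  -- modulus of continuity
  have hfu := Metric.uniformContinuous_iff.mp
    (CompactSpace.uniformContinuous_of_continuous f.continuous)
  have hmod : ∀ η : ℝ, ∃ θ : ℝ,
      0 < η → 0 < θ ∧ ∀ a b : X, dist a b < θ → dist (f a) (f b) < η := by
    intro η
    by_cases hη : 0 < η
    · obtain ⟨θ, hθ, h⟩ := hfu η hη
      exact ⟨θ, fun _ => ⟨hθ, fun a b hab => h hab⟩⟩
    · exact ⟨1, fun h => absurd h hη⟩
  choose mod hmodspec using hmod
  -- the decreasing sequence of tolerances
  set E : ℕ → ℝ := fun j => Nat.rec (δ / 2) (fun _ prev => min (mod (prev / 2)) prev) j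
    with hEdef
  have hE0 : E 0 = δ / 2 := rfl
  have hEsucc : ∀ j, E (j + 1) = min (mod (E j / 2)) (E j) := fun j => rfl
  have hEpos : ∀ j, 0 < E j := by
    intro j
    induction j with
    | zero => rw [hE0]; linarith
    | succ j ih =>
      rw [hEsucc]
      exact lt_min ((hmodspec _ (half_pos ih)).1) ih
  have hEanti : Antitone E := antitone_nat_of_succ_le fun j => by
    rw [hEsucc]; exact min_le_right _ _
  refine ⟨(N : ℝ) + 1, by positivity, E N / 2, half_pos (hEpos N), ?_⟩
  intro d hd hdle x hx k l hl hnot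
  by_contra hcon
  push_neg at hcon
  have hlN : N + 1 < l := by exact_mod_cast hcon
  -- key estimate
  have hkey : ∀ i : ℕ, i ≤ N → dist ((⇑f)^[i] (x k)) (x (k + i)) < E (N - i) := by
    intro i
    induction i with
    | zero =>
      intro _
      simpa using hEpos N
    | succ i ih =>
      intro hi
      have hii : i ≤ N := Nat.le_of_succ_le hi
      have h1 := ih hii
      have hNi : N - i = (N - (i + 1)) + 1 := by omega
      rw [hNi, hEsucc] at h1
      have h1' : dist ((⇑f)^[i] (x k)) (x (k + i)) < mod (E (N - (i + 1)) / 2) :=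
        h1.trans_le (min_le_left _ _)
      have h2 : dist (f ((⇑f)^[i] (x k))) (f (x (k + i))) < E (N - (i + 1)) / 2 :=
        (hmodspec _ (half_pos (hEpos _))).2 _ _ h1'
      have h3 : dist (f (x (k + i))) (x (k + i + 1)) < d := hx (k + i)
      have hd' : d ≤ E (N - (i + 1)) / 2 := by
        have := hEanti (Nat.sub_le N (i + 1))
        linarith
      have hcast : x (k + ((i + 1 : ℕ) : ℤ)) = x (k + i + 1) := by
        congr 1; push_cast; ring
      calc dist ((⇑f)^[i + 1] (x k)) (x (k + ((i + 1 : ℕ) : ℤ)))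
          ≤ dist ((⇑f)^[i + 1] (x k)) (f (x (k + i)))
            + dist (f (x (k + i))) (x (k + ((i + 1 : ℕ) : ℤ))) := dist_triangle _ _ _
        _ < E (N - (i + 1)) / 2 + E (N - (i + 1)) / 2 := by
            rw [Function.iterate_succ_apply', hcast]
            exact add_lt_add h2 (h3.trans_le hd')
        _ = E (N - (i + 1)) := by ring
  obtain ⟨i, hiN, hnotK'⟩ := hN (x k)
  apply hnotK'
  have himem : x (k + i) ∈ K := hnot i (by omega)
  have hdist : dist ((⇑f)^[i] (x k)) (x (k + i)) ≤ δ / 2 := by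
    have h1 := hkey i hiN
    have h2 : E (N - i) ≤ E 0 := hEanti (Nat.zero_le _)
    rw [hE0] at h2
    linarith
  exact Metric.mem_cthickening_of_dist_le _ _ _ _ himem hdist
end

section
/- Let f be a homeomorphism of a compact metric space (X, dist). For any open neighborhood U of the nonwandering set Ω(f) there exists d₁ > 0 such that every periodic d-pseudotrajectory of f with d ≤ d₁ contains at least one point belonging to U (i.e., if {x_i}_{i∈ℤ} is a d-pseudotrajectory with d ≤ d₁ and x_{i+μ} = x_i for all i and some μ ≥ 1, then x_i ∈ U for some i). -/
/-- `x : ℤ → X` is periodic: `x (i + μ) = x i` for all `i` and some `μ ≥ 1`. -/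
def IsPeriodicSeq {X : Type*} (x : ℤ → X) : Prop :=
  ∃ μ : ℕ, 1 ≤ μ ∧ ∀ i : ℤ, x (i + μ) = x i

/-- Let `f` be a homeomorphism of a compact metric space `X`. For any open neighborhood `U`
of the nonwandering set `Ω(f)` there exists `d₁ > 0` such that every periodic
`d`-pseudotrajectory of `f` with `d ≤ d₁` contains at least one point belonging to `U`. -/
theorem periodic_pseudotraj_meets_nbhd_of_nonwandering {X : Type*} [MetricSpace X]
    [CompactSpace X] (f : X ≃ₜ X) (U : Set X) (hUopen : IsOpen U)
    (hU : NonWanderingSet f ⊆ U) :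
    ∃ d₁ > (0 : ℝ), ∀ d : ℝ, 0 < d → d ≤ d₁ →
      ∀ x : ℤ → X, IsPseudoTraj f d x → IsPeriodicSeq x → ∃ i : ℤ, x i ∈ U := by
  by_contra hcon
  push_neg at hcon
  -- for each m, get a 1/(m+1)-pseudotrajectory avoiding U
  have H : ∀ m : ℕ, ∃ x : ℤ → X, IsPseudoTraj f (1 / (m + 1)) x ∧ ∀ i : ℤ, x i ∉ U := by
    intro m
    have hpos : (0 : ℝ) < 1 / (m + 1) := by positivity
    obtain ⟨d, hd0, hdle, x, hpt, _, hnU⟩ := hcon (1 / (m + 1)) hpos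
    exact ⟨x, fun i => lt_of_lt_of_le (hpt i) hdle, hnU⟩
  choose x hx hxU using H
  set C : ℕ → Set X := fun N => closure (⋃ m, ⋃ (_ : N ≤ m), Set.range (x m)) with hC
  have hCcl : ∀ N, IsClosed (C N) := fun N => isClosed_closure
  have hCne : ∀ N, (C N).Nonempty := by
    intro N
    exact ⟨x N 0, subset_closure (Set.mem_iUnion₂.2 ⟨N, le_refl N, ⟨0, rfl⟩⟩)⟩
  have hCanti : ∀ N, C (N + 1) ⊆ C N := by
    intro N
    apply closure_mono
    refine Set.iUnion₂_subset fun m hm => ?_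
    exact Set.subset_iUnion₂ (s := fun m _ => Set.range (x m)) m (by omega)
  have hC0K : C 0 ⊆ Uᶜ := by
    apply closure_minimal _ hUopen.isClosed_compl
    refine Set.iUnion₂_subset fun m _ => ?_
    rintro _ ⟨i, rfl⟩
    exact hxU m i
  -- the limit set Y
  obtain ⟨z, hz⟩ := IsCompact.nonempty_iInter_of_sequence_nonempty_isCompact_isClosed
    C hCanti hCne (hCcl 0).isCompact hCcl
  have hfu : UniformContinuous (⇑f) := CompactSpace.uniformContinuous_of_continuous f.continuous
  rw [Metric.uniformContinuous_iff] at hfu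
  -- forward invariance of Y
  have hfwd : ∀ w, w ∈ (⋂ N, C N) → f w ∈ ⋂ N, C N := by
    intro w hw
    rw [Set.mem_iInter] at hw ⊢
    intro N
    rw [hC]
    rw [Metric.mem_closure_iff]
    intro ε hε
    obtain ⟨δ, hδ, hδε⟩ := hfu (ε / 2) (half_pos hε)
    obtain ⟨M, hM⟩ := exists_nat_gt (2 / ε)
    have hwM := hw (max N M)
    rw [hC, Metric.mem_closure_iff] at hwM
    obtain ⟨b, hb, hwb⟩ := hwM δ hδ
    rw [Set.mem_iUnion₂] at hb
    obtain ⟨m, hm, i, rfl⟩ := hb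
    refine ⟨x m (i + 1), Set.mem_iUnion₂.2 ⟨m, le_trans (le_max_left N M) hm, ⟨i + 1, rfl⟩⟩, ?_⟩
    have h1 : dist (f w) (f (x m i)) < ε / 2 := hδε hwb
    have h2 : dist (f (x m i)) (x m (i + 1)) < 1 / (m + 1) := hx m i
    have hmM : (M : ℝ) ≤ m := by
      exact_mod_cast le_trans (le_max_right N M) hm
    have h3 : (1 : ℝ) / (m + 1) < ε / 2 := by
      have h4 : (2 : ℝ) / ε < m + 1 := by linarith
      rw [div_lt_div_iff₀ (by positivity) (by norm_num)]
      rw [div_lt_iff₀ hε] at h4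
      linarith
    calc dist (f w) (x m (i + 1)) ≤ dist (f w) (f (x m i)) + dist (f (x m i)) (x m (i + 1)) :=
          dist_triangle _ _ _
      _ < ε / 2 + ε / 2 := by linarith
      _ = ε := by ring
  -- iterates stay in Y
  have hiter : ∀ n : ℕ, f^[n] z ∈ ⋂ N, C N := by
    intro n
    induction n with
    | zero => exact hz
    | succ n ih => rw [Function.iterate_succ_apply']; exact hfwd _ ih
  -- Y is compact
  have hYcomp : IsCompact (⋂ N, C N) := (isClosed_iInter hCcl).isCompact
  obtain ⟨w, hwY, φ, hφ, hlim⟩ := hYcomp.tendsto_subseq hiter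
  -- w is nonwandering
  have hwNW : w ∈ NonWanderingSet (⇑f) := by
    intro V hV
    have hev : ∀ᶠ k in Filter.atTop, f^[φ k] z ∈ V := hlim hV
    obtain ⟨k₀, hk₀⟩ := hev.exists_forall_of_atTop
    refine ⟨φ (k₀ + 1) - φ k₀, ?_, f^[φ k₀] z, hk₀ k₀ le_rfl, ?_⟩
    · have := hφ (lt_add_one k₀)
      omega
    · have heq : φ (k₀ + 1) - φ k₀ + φ k₀ = φ (k₀ + 1) := by
        have := hφ (lt_add_one k₀)
        omega
      rw [← Function.iterate_add_apply, heq]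
      exact hk₀ (k₀ + 1) (Nat.le_succ k₀)
  have : w ∈ Uᶜ := hC0K ((Set.mem_iInter.1 hwY) 0)
  exact this (hU hwNW)
end

section
/- Let f be a homeomorphism of a compact metric space (X, dist) having the periodic shadowing property. Then the nonwandering set Ω(f) is contained in the closure of the set Per(f) of periodic points of f. -/
/-- A homeomorphism `f` has the periodic shadowing property: for every `ε > 0` there is
`d > 0` such that every periodic `d`-pseudotrajectory is `ε`-shadowed by the trajectory
of a periodic point of `f`. -/
def PeriodicShadowing {X : Type*} [MetricSpace X] (f : X ≃ₜ X) : Prop :=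
  ∀ ε > (0 : ℝ), ∃ d > (0 : ℝ), ∀ x : ℤ → X, IsPseudoTraj f d x → IsPeriodicSeq x →
    ∃ p : X, (∃ μ : ℕ, 1 ≤ μ ∧ (⇑f)^[μ] p = p) ∧
      ∀ i : ℤ, dist ((f.toEquiv ^ i) p) (x i) < ε

/-- If a homeomorphism `f` of a compact metric space has the periodic shadowing property,
then the nonwandering set `Ω(f)` is contained in the closure of the set of periodic
points of `f`. -/
theorem nonwandering_subset_closure_periodic {X : Type*} [MetricSpace X] [CompactSpace X]
    (f : X ≃ₜ X) (hf : PeriodicShadowing f) :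
    NonWanderingSet f ⊆ closure {p : X | ∃ μ : ℕ, 1 ≤ μ ∧ (⇑f)^[μ] p = p} := by

  intro x hx
  rw [Metric.mem_closure_iff]
  intro ε hε
  obtain ⟨d, hd, hshad⟩ := hf ε hε
  obtain ⟨δ, hδ, hcont⟩ :=
    Metric.continuousAt_iff.mp f.continuous.continuousAt (d / 2) (by linarith)
  have hd' : 0 < min δ (d / 2) := lt_min hδ (by linarith)
  obtain ⟨n, hn, y, hy, hfy⟩ := hx (Metric.ball x (min δ (d / 2))) (Metric.ball_mem_nhds x hd')
  rw [Metric.mem_ball] at hy hfy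
  have hnz : (0 : ℤ) < (n : ℤ) := by exact_mod_cast hn
  set seq : ℤ → X := fun i => if i % (n : ℤ) = 0 then x else (⇑f)^[(i % (n : ℤ)).toNat] y
    with hseq
  have hmod : ∀ i : ℤ, 0 ≤ i % (n : ℤ) ∧ i % (n : ℤ) < (n : ℤ) := fun i =>
    ⟨Int.emod_nonneg i (by omega), Int.emod_lt_of_pos i hnz⟩
  have hstep : ∀ i : ℤ, (i + 1) % (n : ℤ) = (i % (n : ℤ) + 1) % (n : ℤ) := by
    intro i
    conv_lhs => rw [← Int.emod_add_emod i (n : ℤ) 1]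
  have htraj : IsPseudoTraj f d seq := by
    intro i
    obtain ⟨h0, h1⟩ := hmod i
    rcases eq_or_lt_of_le (by omega : i % (n : ℤ) + 1 ≤ (n : ℤ)) with hB | hA
    · -- case: wrap around
      have hmod1 : (i + 1) % (n : ℤ) = 0 := by
        rw [hstep i, hB, Int.emod_self]
      rcases eq_or_lt_of_le h0 with hj0 | hjpos
      · -- i % n = 0, so n = 1
        have hn1 : (n : ℤ) = 1 := by omega
        have hfy1 : dist ((⇑f)^[n] y) x < min δ (d / 2) := hfy
        have hy1 : dist (f y) x < d / 2 := by
          have : (n : ℕ) = 1 := by exact_mod_cast hn1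
          rw [this] at hfy1
          simpa using lt_of_lt_of_le hfy1 (min_le_right _ _)
        have hfx : dist (f y) (f x) < d / 2 := hcont (lt_of_lt_of_le hy (min_le_left _ _))
        simp only [hseq]
        rw [if_pos hj0.symm, if_pos hmod1]
        calc dist (f x) x ≤ dist (f x) (f y) + dist (f y) x := dist_triangle _ _ _
          _ < d / 2 + d / 2 := by rw [dist_comm (f x) (f y)]; exact add_lt_add hfx hy1
          _ = d := by ring
      · -- i % n ≥ 1
        simp only [hseq]
        rw [if_neg (by omega), if_pos hmod1]
        have : f ((⇑f)^[(i % (n:ℤ)).toNat] y) = (⇑f)^[(i % (n:ℤ)).toNat + 1] y := by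
          rw [Function.iterate_succ_apply']
        rw [this]
        have hnn : (i % (n:ℤ)).toNat + 1 = n := by omega
        rw [hnn]
        exact lt_of_lt_of_le hfy (le_trans (min_le_right _ _) (by linarith))
    · -- case: no wrap
      have hmod1 : (i + 1) % (n : ℤ) = i % (n : ℤ) + 1 := by
        rw [hstep i, Int.emod_eq_of_lt (by omega) hA]
      rcases eq_or_lt_of_le h0 with hj0 | hjpos
      · -- i % n = 0
        simp only [hseq]
        rw [if_pos hj0.symm, if_neg (by omega)]
        have : ((i + 1) % (n:ℤ)).toNat = 1 := by omega
        rw [this]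
        have hfx : dist (f y) (f x) < d / 2 := hcont (lt_of_lt_of_le hy (min_le_left _ _))
        rw [dist_comm] at hfx
        simpa using lt_of_lt_of_le hfx (by linarith)
      · simp only [hseq]
        rw [if_neg (by omega), if_neg (by omega)]
        have h2 : ((i + 1) % (n:ℤ)).toNat = (i % (n:ℤ)).toNat + 1 := by omega
        rw [h2, Function.iterate_succ_apply']
        simpa using hd
  have hper : IsPeriodicSeq seq := by
    refine ⟨n, hn, fun i => ?_⟩
    simp only [hseq]
    rw [show (i + (n : ℤ)) % (n : ℤ) = i % (n : ℤ) by simp]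
  obtain ⟨p, hp, hdist⟩ := hshad seq htraj hper
  refine ⟨p, hp, ?_⟩
  have h0 := hdist 0
  have hz : (f.toEquiv ^ (0 : ℤ)) p = p := by rw [zpow_zero]; rfl
  have hs0 : seq 0 = x := by simp [hseq]
  rw [hz, hs0] at h0
  rwa [dist_comm]
end

section
/- Let E be a real normed vector space, let A : E → E be a continuous linear map with operator norm ‖A‖ ≤ N, let μ ∈ (0, 1], and let F : E → E be a map satisfying ‖F(v) − A(v)‖ ≤ μ‖v‖ for all v ∈ E. Then for every q ∈ E and every integer k ≥ 0, ‖F^k(q) − A^k(q)‖ ≤ μ · k · (N + 1)^k · ‖q‖. In particular, the deviation of the orbit of F from the orbit of its linearization A over any fixed number of steps K is at most μ·ν·‖q‖ with ν = K(N+1)^K depending only on K and N. -/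
/-- Let `A : E → E` be a continuous linear map with `‖A‖ ≤ N`, let `μ ∈ (0, 1]`, and let
`F : E → E` satisfy `‖F v - A v‖ ≤ μ * ‖v‖` for all `v`. Then for every `q ∈ E` and every
`k ≥ 0`, the `k`-th iterates satisfy `‖F^[k] q - A^k q‖ ≤ μ * k * (N + 1)^k * ‖q‖`. -/
theorem iterate_deviation_from_linearization {E : Type*} [NormedAddCommGroup E]
    [NormedSpace ℝ E] (A : E →L[ℝ] E) (N : ℝ) (hA : ‖A‖ ≤ N)
    (μ : ℝ) (hμ0 : 0 < μ) (hμ1 : μ ≤ 1)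
    (F : E → E) (hF : ∀ v : E, ‖F v - A v‖ ≤ μ * ‖v‖) :
    ∀ (q : E) (k : ℕ), ‖F^[k] q - (A ^ k) q‖ ≤ μ * k * (N + 1) ^ k * ‖q‖ := by
  intro q k
  have hN0 : 0 ≤ N := le_trans (norm_nonneg A) hA
  have hFle : ∀ v : E, ‖F v‖ ≤ (N + 1) * ‖v‖ := by
    intro v
    calc ‖F v‖ = ‖(F v - A v) + A v‖ := by rw [sub_add_cancel]
      _ ≤ ‖F v - A v‖ + ‖A v‖ := norm_add_le _ _
      _ ≤ μ * ‖v‖ + N * ‖v‖ :=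
          add_le_add (hF v)
            (le_trans (A.le_opNorm v) (mul_le_mul_of_nonneg_right hA (norm_nonneg v)))
      _ ≤ (N + 1) * ‖v‖ := by nlinarith [norm_nonneg v]
  have hFit : ∀ k : ℕ, ‖F^[k] q‖ ≤ (N + 1) ^ k * ‖q‖ := by
    intro k
    induction k with
    | zero => simp
    | succ n ih =>
      rw [Function.iterate_succ_apply']
      calc ‖F (F^[n] q)‖ ≤ (N + 1) * ‖F^[n] q‖ := hFle _
        _ ≤ (N + 1) * ((N + 1) ^ n * ‖q‖) :=
            mul_le_mul_of_nonneg_left ih (by linarith)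
        _ = (N + 1) ^ (n + 1) * ‖q‖ := by ring
  induction k with
  | zero => simp
  | succ n ih =>
    rw [Function.iterate_succ_apply']
    have key : ‖F (F^[n] q) - (A ^ (n + 1)) q‖ ≤
        ‖F (F^[n] q) - A (F^[n] q)‖ + ‖A (F^[n] q) - A ((A ^ n) q)‖ := by
      have : F (F^[n] q) - (A ^ (n + 1)) q =
          (F (F^[n] q) - A (F^[n] q)) + (A (F^[n] q) - A ((A ^ n) q)) := by
        rw [pow_succ', ContinuousLinearMap.mul_apply]
        abel
      rw [this]; exact norm_add_le _ _
    have h1 : ‖F (F^[n] q) - A (F^[n] q)‖ ≤ μ * ((N + 1) ^ n * ‖q‖) :=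
      le_trans (hF _) (mul_le_mul_of_nonneg_left (hFit n) hμ0.le)
    have h2 : ‖A (F^[n] q) - A ((A ^ n) q)‖ ≤ N * (μ * n * (N + 1) ^ n * ‖q‖) := by
      rw [← map_sub]
      exact le_trans (A.le_opNorm _)
        (mul_le_mul hA ih (norm_nonneg _) hN0)
    refine le_trans key (le_trans (add_le_add h1 h2) ?_)
    have hp : (0:ℝ) ≤ (N + 1) ^ n := by positivity
    have hq : (0:ℝ) ≤ ‖q‖ := norm_nonneg q
    have hn : (0:ℝ) ≤ (n:ℝ) := Nat.cast_nonneg n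
    push_cast
    rw [pow_succ]
    nlinarith [mul_nonneg hp hq, mul_nonneg (mul_nonneg hn hp) hq, hμ0.le,
      mul_nonneg (mul_nonneg hμ0.le hp) hq,
      mul_nonneg (mul_nonneg (mul_nonneg hμ0.le hn) hp) hq]
end

section
/- Let E be a real normed vector space, let C > 0 and λ ∈ (0, 1), and for each integer j ≥ 0 let T_j : E → E be a linear map. Let S₀, U₀, S₁, U₁ be linear subspaces of E such that E = S₀ ⊕ U₀ and E = S₁ ⊕ U₁. Assume that ‖T_j v‖ ≤ C λ^j ‖v‖ for all j ≥ 0 and all v ∈ S₀ ∪ S₁, and that ‖T_j v‖ ≥ C^{−1} λ^{−j} ‖v‖ for all j ≥ 0 and all v ∈ U₀ ∪ U₁. Then S₀ = S₁. -/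
lemma stable_subspace_le {E : Type*} [NormedAddCommGroup E] [NormedSpace ℝ E]
    (C lam : ℝ) (hC : 0 < C) (hlam0 : 0 < lam) (hlam1 : lam < 1)
    (T : ℕ → E →ₗ[ℝ] E)
    (S₀ S₁ U₁ : Submodule ℝ E)
    (hc1 : IsCompl S₁ U₁)
    (hS : ∀ j : ℕ, ∀ v ∈ (S₀ : Set E) ∪ (S₁ : Set E), ‖T j v‖ ≤ C * lam ^ j * ‖v‖)
    (hU : ∀ j : ℕ, ∀ v ∈ (U₁ : Set E), C⁻¹ * (lam ^ j)⁻¹ * ‖v‖ ≤ ‖T j v‖) :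
    S₀ ≤ S₁ := by
  intro v hv
  obtain ⟨s, u, hsu, -⟩ := Submodule.existsUnique_add_of_isCompl hc1 v
  -- key: ‖u‖ ≤ C^2 * lam^(2j) * (‖v‖ + ‖s‖) for all j
  have key : ∀ j : ℕ, (u : E) = 0 ∨ ‖(u : E)‖ ≤ C ^ 2 * lam ^ (2 * j) * (‖v‖ + ‖s‖) := by
    intro j
    right
    have hTu : ‖T j u‖ ≤ ‖T j v‖ + ‖T j s‖ := by
      have : (T j) (u : E) = T j v - T j s := by
        rw [← hsu]; simp [map_add]
      rw [this]
      exact norm_sub_le _ _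
    have h1 : ‖T j v‖ ≤ C * lam ^ j * ‖v‖ := hS j v (Or.inl hv)
    have h2 : ‖T j s‖ ≤ C * lam ^ j * ‖s‖ := hS j s (Or.inr s.2)
    have h3 : C⁻¹ * (lam ^ j)⁻¹ * ‖(u : E)‖ ≤ ‖T j u‖ := hU j u u.2
    have h4 : C⁻¹ * (lam ^ j)⁻¹ * ‖(u : E)‖ ≤ C * lam ^ j * (‖v‖ + ‖s‖) := by
      calc C⁻¹ * (lam ^ j)⁻¹ * ‖(u : E)‖ ≤ ‖T j u‖ := h3
        _ ≤ ‖T j v‖ + ‖T j s‖ := hTu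
        _ ≤ C * lam ^ j * ‖v‖ + C * lam ^ j * ‖s‖ := add_le_add h1 h2
        _ = C * lam ^ j * (‖v‖ + ‖s‖) := by ring
    have hlj : (0:ℝ) < lam ^ j := pow_pos hlam0 j
    have : ‖(u : E)‖ ≤ C * lam ^ j * (‖v‖ + ‖s‖) * (C * lam ^ j) := by
      have h5 := mul_le_mul_of_nonneg_right h4
        (le_of_lt (by positivity : (0:ℝ) < C * lam ^ j))
      calc ‖(u:E)‖ = C⁻¹ * (lam ^ j)⁻¹ * ‖(u:E)‖ * (C * lam ^ j) := by
            field_simp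
        _ ≤ C * lam ^ j * (‖v‖ + ‖s‖) * (C * lam ^ j) := h5
    calc ‖(u : E)‖ ≤ C * lam ^ j * (‖v‖ + ‖s‖) * (C * lam ^ j) := this
      _ = C ^ 2 * lam ^ (2 * j) * (‖v‖ + ‖s‖) := by rw [pow_mul]; ring
  have hu0 : (u : E) = 0 := by
    by_contra hne
    have key' : ∀ j : ℕ, ‖(u : E)‖ ≤ C ^ 2 * lam ^ (2 * j) * (‖v‖ + ‖s‖) := fun j =>
      (key j).resolve_left hne
    have htend : Filter.Tendsto (fun j : ℕ => C ^ 2 * lam ^ (2 * j) * (‖v‖ + ‖s‖))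
        Filter.atTop (nhds 0) := by
      have h0 : Filter.Tendsto (fun j : ℕ => lam ^ (2 * j)) Filter.atTop (nhds 0) := by
        simpa [pow_mul] using
          tendsto_pow_atTop_nhds_zero_of_lt_one (by positivity : (0:ℝ) ≤ lam ^ 2)
            (by nlinarith : lam ^ 2 < 1)
      have := (h0.const_mul (C ^ 2)).mul_const (‖v‖ + ‖s‖)
      simpa [mul_comm, mul_assoc] using this
    have : ‖(u : E)‖ ≤ 0 :=
      le_of_tendsto_of_tendsto tendsto_const_nhds htend
        (Filter.Eventually.of_forall key')
    exact hne (norm_le_zero_iff.mp this)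
  have : v = (s : E) := by rw [← hsu, hu0, add_zero]
  rw [this]; exact s.2

/-- Let `E` be a real normed space, `C > 0`, `λ ∈ (0,1)`, and for each `j ≥ 0` let
`T j : E → E` be a linear map. Let `S₀, U₀, S₁, U₁` be subspaces with `E = S₀ ⊕ U₀` and
`E = S₁ ⊕ U₁` (complementary subspaces, expressed via `IsCompl`). If
`‖T j v‖ ≤ C λ^j ‖v‖` for all `j` and all `v ∈ S₀ ∪ S₁`, and
`‖T j v‖ ≥ C⁻¹ λ^{-j} ‖v‖` for all `j` and all `v ∈ U₀ ∪ U₁`, then `S₀ = S₁`. -/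
theorem stable_subspace_unique {E : Type*} [NormedAddCommGroup E] [NormedSpace ℝ E]
    (C lam : ℝ) (hC : 0 < C) (hlam0 : 0 < lam) (hlam1 : lam < 1)
    (T : ℕ → E →ₗ[ℝ] E)
    (S₀ U₀ S₁ U₁ : Submodule ℝ E)
    (hc0 : IsCompl S₀ U₀) (hc1 : IsCompl S₁ U₁)
    (hS : ∀ j : ℕ, ∀ v ∈ (S₀ : Set E) ∪ (S₁ : Set E), ‖T j v‖ ≤ C * lam ^ j * ‖v‖)
    (hU : ∀ j : ℕ, ∀ v ∈ (U₀ : Set E) ∪ (U₁ : Set E),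
      C⁻¹ * (lam ^ j)⁻¹ * ‖v‖ ≤ ‖T j v‖) :
    S₀ = S₁ := by
  apply le_antisymm
  · exact stable_subspace_le C lam hC hlam0 hlam1 T S₀ S₁ U₁ hc1 hS
      (fun j v hv => hU j v (Or.inr hv))
  · exact stable_subspace_le C lam hC hlam0 hlam1 T S₁ S₀ U₀ hc0
      (fun j v hv => hS j v hv.symm) (fun j v hv => hU j v (Or.inl hv))
end

section
/- Let m ≥ 1, let B : ℝ^m → ℝ^m be a linear automorphism, and define the homeomorphism H : ℝ × ℝ^m → ℝ × ℝ^m by H(u, w) = (u, Bw), where ℝ × ℝ^m carries the Euclidean distance. Then H does not have the periodic shadowing property; that is, there exists ε > 0 such that for every d > 0 there is a periodic d-pseudotrajectory {x_i}_{i∈ℤ} of H such that no periodic point p of H satisfies dist(H^i(p), x_i) < ε for all i ∈ ℤ. -/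
/-- Triangle wave on ℤ with half-period n. -/
def triWave (n i : ℤ) : ℤ := min (i % (2 * n)) (2 * n - i % (2 * n))

lemma triWave_period (n : ℤ) (i : ℤ) : triWave n (i + 2 * n) = triWave n i := by
  unfold triWave
  rw [show i + 2 * n = i + 2 * n * 1 by ring, Int.add_mul_emod_self_left]

lemma triWave_zero (n : ℤ) (hn : 1 ≤ n) : triWave n 0 = 0 := by
  unfold triWave
  rw [Int.zero_emod]
  omega

lemma triWave_n (n : ℤ) (hn : 1 ≤ n) : triWave n n = n := by
  unfold triWave
  rw [Int.emod_eq_of_lt (by omega) (by omega)]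
  omega

lemma triWave_step (n : ℤ) (hn : 1 ≤ n) (i : ℤ) :
    |triWave n (i + 1) - triWave n i| ≤ 1 := by
  have h1 : 0 ≤ i % (2 * n) := Int.emod_nonneg i (by omega)
  have h2 : i % (2 * n) < 2 * n := Int.emod_lt_of_pos i (by omega)
  have h1m : (1 : ℤ) % (2 * n) = 1 := Int.emod_eq_of_lt (by omega) (by omega)
  have hadd : (i + 1) % (2 * n) = (i % (2 * n) + 1) % (2 * n) := by
    rw [Int.add_emod, h1m]
  rcases lt_or_eq_of_le (by omega : i % (2 * n) + 1 ≤ 2 * n) with h | h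
  · have : (i % (2 * n) + 1) % (2 * n) = i % (2 * n) + 1 :=
      Int.emod_eq_of_lt (by omega) h
    unfold triWave
    rw [hadd, this, abs_le]
    omega
  · have : (i % (2 * n) + 1) % (2 * n) = 0 := by rw [h, Int.emod_self]
    unfold triWave
    rw [hadd, this, abs_le]
    omega

/-- Let `m ≥ 1`, let `B` be a linear automorphism of `ℝ^m`, and let `H` be the
homeomorphism of `ℝ × ℝ^m` (with the Euclidean distance, realized as the `L²` product
`WithLp 2 (ℝ × EuclideanSpace ℝ (Fin m))`) given by `H (u, w) = (u, B w)`. Then `H` does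
not have the periodic shadowing property: there exists `ε > 0` such that for every `d > 0`
there is a periodic `d`-pseudotrajectory of `H` that is not `ε`-shadowed by the trajectory
of any periodic point of `H`. -/
theorem no_periodic_shadowing_neutral_direction (m : ℕ) (hm : 1 ≤ m)
    (B : EuclideanSpace ℝ (Fin m) ≃ₗ[ℝ] EuclideanSpace ℝ (Fin m))
    (H : WithLp 2 (ℝ × EuclideanSpace ℝ (Fin m)) ≃
      WithLp 2 (ℝ × EuclideanSpace ℝ (Fin m)))
    (hH : ∀ x, H x = (WithLp.equiv 2 (ℝ × EuclideanSpace ℝ (Fin m))).symm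
      (((WithLp.equiv 2 (ℝ × EuclideanSpace ℝ (Fin m))) x).1,
        B ((WithLp.equiv 2 (ℝ × EuclideanSpace ℝ (Fin m))) x).2)) :
    ∃ ε > (0 : ℝ), ∀ d > (0 : ℝ),
      ∃ x : ℤ → WithLp 2 (ℝ × EuclideanSpace ℝ (Fin m)),
        IsPseudoTraj H d x ∧ IsPeriodicSeq x ∧
        ∀ p, (∃ μ : ℕ, 1 ≤ μ ∧ (H ^ μ) p = p) →
          ¬ ∀ i : ℤ, dist ((H ^ i) p) (x i) < ε := by
  classical
  -- the first coordinate is invariant under H, H⁻¹, and all integer powers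
  have hfst : ∀ y : WithLp 2 (ℝ × EuclideanSpace ℝ (Fin m)), (H y).fst = y.fst := by
    intro y; rw [hH y]; rfl
  have hfst_inv : ∀ y : WithLp 2 (ℝ × EuclideanSpace ℝ (Fin m)), (H⁻¹ y).fst = y.fst := by
    intro y
    conv_rhs => rw [← H.apply_symm_apply y]
    rw [show (H⁻¹ : _ ≃ _) = H.symm from rfl, hfst]
  have hfst_zpow : ∀ (i : ℤ) (y : WithLp 2 (ℝ × EuclideanSpace ℝ (Fin m))),
      ((H ^ i) y).fst = y.fst := by
    intro i
    induction i using Int.induction_on with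
    | zero => intro y; rfl
    | succ k ih =>
        intro y
        rw [zpow_add_one, Equiv.Perm.mul_apply, ih, hfst]
    | pred k ih =>
        intro y
        rw [zpow_sub_one, Equiv.Perm.mul_apply, ih, hfst_inv]
  refine ⟨1, one_pos, fun d hd => ?_⟩
  -- set up the triangle wave
  set nn : ℕ := ⌈6 / d⌉₊ + 1 with hnn
  set n : ℤ := (nn : ℤ) with hnZ
  have hn1 : 1 ≤ n := by omega
  have hn3 : 3 ≤ d / 2 * n := by
    have h6 : 6 / d ≤ (nn : ℝ) := le_trans (Nat.le_ceil _) (by exact_mod_cast Nat.le_succ _)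
    have h7 : 6 ≤ d * nn := by
      rw [div_le_iff₀ hd] at h6; linarith [h6]
    have hcast : ((n : ℤ) : ℝ) = (nn : ℝ) := by rw [hnZ]; push_cast; ring
    rw [hcast]; linarith
  set s : ℤ → ℝ := fun i => d / 2 * (triWave n i) with hs
  set x : ℤ → WithLp 2 (ℝ × EuclideanSpace ℝ (Fin m)) :=
    fun i => (WithLp.equiv 2 (ℝ × EuclideanSpace ℝ (Fin m))).symm (s i, 0) with hx
  have hxfst : ∀ i, (x i).fst = s i := fun i => rfl
  have hxsnd : ∀ i, (x i).snd = 0 := fun i => rfl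
  -- the distance dominates the distance between first coordinates
  have hdist_fst : ∀ (a b : WithLp 2 (ℝ × EuclideanSpace ℝ (Fin m))),
      dist a.fst b.fst ≤ dist a b := by
    intro a b
    rw [WithLp.prod_dist_eq_of_L2]
    have h1 := Real.sqrt_le_sqrt (show dist a.fst b.fst ^ 2 ≤
      dist a.fst b.fst ^ 2 + dist a.snd b.snd ^ 2 by nlinarith [sq_nonneg (dist a.snd b.snd)])
    rwa [Real.sqrt_sq dist_nonneg] at h1
  refine ⟨x, ?_, ?_, ?_⟩
  · -- pseudotrajectory
    intro i
    have hHx : H (x i) = (WithLp.equiv 2 (ℝ × EuclideanSpace ℝ (Fin m))).symm (s i, 0) := by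
      rw [hH (x i)]
      have hB : B ((WithLp.equiv 2 (ℝ × EuclideanSpace ℝ (Fin m))) (x i)).snd = 0 := by
        rw [show ((WithLp.equiv 2 (ℝ × EuclideanSpace ℝ (Fin m))) (x i)).snd
          = (0 : EuclideanSpace ℝ (Fin m)) from rfl, map_zero]
      rw [hB]
      rfl
    have hHx' : H (x i) = x i := hHx
    rw [hHx', WithLp.prod_dist_eq_of_L2]
    have h2 : dist (x i).snd (x (i + 1)).snd = 0 := by
      simp only [hxsnd, dist_self]
    have h1 : dist (x i).fst (x (i + 1)).fst = |s i - s (i + 1)| := by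
      simp only [hxfst, Real.dist_eq]
    rw [h1, h2]
    have hb : |s i - s (i + 1)| ≤ d / 2 := by
      rw [hs]
      have heq : d / 2 * (triWave n i) - d / 2 * (triWave n (i + 1))
          = d / 2 * ((triWave n i : ℝ) - (triWave n (i + 1) : ℝ)) := by ring
      simp only [heq, abs_mul, abs_of_pos (by linarith : (0:ℝ) < d / 2)]
      have hstep : |(triWave n i : ℝ) - (triWave n (i + 1) : ℝ)| ≤ 1 := by
        have h := triWave_step n hn1 i
        rw [abs_sub_comm] at h
        exact_mod_cast h
      nlinarith
    calc Real.sqrt (|s i - s (i + 1)| ^ 2 + 0 ^ 2)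
        = |s i - s (i + 1)| := by
          rw [show |s i - s (i+1)| ^ 2 + (0:ℝ) ^ 2 = |s i - s (i+1)| ^ 2 by ring,
            Real.sqrt_sq (abs_nonneg _)]
      _ ≤ d / 2 := hb
      _ < d := by linarith
  · -- periodicity
    refine ⟨2 * nn, by omega, fun i => ?_⟩
    have hcast : i + ((2 * nn : ℕ) : ℤ) = i + 2 * n := by rw [hnZ]; push_cast; ring
    have hsper : s (i + ((2 * nn : ℕ) : ℤ)) = s i := by
      rw [hcast]
      simp only [hs, triWave_period]
    simp only [hx, hsper]
  · -- not shadowed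
    rintro p ⟨μ, hμ, hper⟩ hshadow
    have h0 := hshadow 0
    have hnsh := hshadow n
    have hp0 : ((H ^ (0 : ℤ)) p).fst = p.fst := hfst_zpow 0 p
    have hpn : ((H ^ n) p).fst = p.fst := hfst_zpow n p
    have hb0 : dist (p.fst) (x 0).fst < 1 := by
      calc dist (p.fst) (x 0).fst = dist (((H ^ (0:ℤ)) p).fst) (x 0).fst := by rw [hp0]
        _ ≤ dist ((H ^ (0:ℤ)) p) (x 0) := hdist_fst _ _
        _ < 1 := h0
    have hbn : dist (p.fst) (x n).fst < 1 := by
      calc dist (p.fst) (x n).fst = dist (((H ^ n) p).fst) (x n).fst := by rw [hpn]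
        _ ≤ dist ((H ^ n) p) (x n) := hdist_fst _ _
        _ < 1 := hnsh
    have hx0 : (x 0).fst = 0 := by
      rw [hxfst]; simp only [hs, triWave_zero n hn1]; simp
    have hxn : (x n).fst = d / 2 * n := by
      rw [hxfst]; simp only [hs, triWave_n n hn1]
    rw [hx0, Real.dist_eq, sub_zero] at hb0
    rw [hxn, Real.dist_eq] at hbn
    rcases abs_lt.mp hb0 with ⟨ha, hb⟩
    rcases abs_lt.mp hbn with ⟨hc, hd'⟩
    linarith
end
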